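/- (Joint-state identity in the proof of Theorem 3.) Work in the 4-qubit space EuclideanSpace ℂ (Fin 4 → ZMod 2) with qubits ordered (s₁, s₂, r, m), where s₁ carries the message qubit φ = α|0⟩ + β|1⟩ (α, β ∈ ℂ) and (s₂, r, m) carry the 3-qubit W state W₃. Then applying CNOT with control s₁ and target s₂, followed by the Hadamard gate H on qubit s₁, to φ ⊗ W₃ yields exactly (1/√6)[ |00⟩_{s₁s₂}((α|1⟩ + β|0⟩)_r|0⟩_m + α|0⟩_r|1⟩_m) + |01⟩_{s₁s₂}((α|0⟩ + β|1⟩)_r|0⟩_m + β|0⟩_r|1⟩_m) + |10⟩_{s₁s₂}((α|1⟩ − β|0⟩)_r|0⟩_m + α|0⟩_r|1⟩_m) + |11⟩_{s₁s₂}((α|0⟩ − β|1⟩)_r|0⟩_m − β|0⟩_r|1⟩_m) ]. -/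

import Mathlib

/-- Amplitude of the 3-qubit W state at bitstring `(a, b, c)`. -/
noncomputable def w3amp (a b c : ZMod 2) : ℂ :=
  if (a = 1 ∧ b = 0 ∧ c = 0) ∨ (a = 0 ∧ b = 1 ∧ c = 0) ∨ (a = 0 ∧ b = 0 ∧ c = 1)
  then ((1 / Real.sqrt 3 : ℝ) : ℂ) else 0

/-- The joint state `φ ⊗ W₃` with `φ = α|0⟩ + β|1⟩` on qubit `s₁ = 0` and the
3-qubit W state on qubits `(s₂, r, m) = (1, 2, 3)`. -/
noncomputable def jointState (α β : ℂ) : EuclideanSpace ℂ (Fin 4 → ZMod 2) :=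
  WithLp.toLp 2 (fun x => (if x 0 = 0 then α else β) * w3amp (x 1) (x 2) (x 3))

/-- CNOT with control qubit `0` and target qubit `1` (a self-inverse basis permutation). -/
noncomputable def cnot01 (ψ : EuclideanSpace ℂ (Fin 4 → ZMod 2)) :
    EuclideanSpace ℂ (Fin 4 → ZMod 2) :=
  WithLp.toLp 2 (fun x => ψ (Function.update x 1 (x 1 + x 0)))

/-- Hadamard gate on qubit `0`. -/
noncomputable def had0 (ψ : EuclideanSpace ℂ (Fin 4 → ZMod 2)) :
    EuclideanSpace ℂ (Fin 4 → ZMod 2) :=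
  WithLp.toLp 2 (fun x => ((1 / Real.sqrt 2 : ℝ) : ℂ) *
    (ψ (Function.update x 0 0) + (if x 0 = 0 then 1 else -1) * ψ (Function.update x 0 1)))

/-- The state `|Φ⟩₁` obtained by applying CNOT (control `s₁`, target `s₂`) and then
Hadamard on `s₁` to `(α|0⟩ + β|1⟩) ⊗ W₃`. -/
noncomputable def Phi1 (α β : ℂ) : EuclideanSpace ℂ (Fin 4 → ZMod 2) :=
  had0 (cnot01 (jointState α β))

/-- Computational-basis vector `|b₀b₁b₂b₃⟩`. -/
noncomputable def ket4 (b0 b1 b2 b3 : ZMod 2) : EuclideanSpace ℂ (Fin 4 → ZMod 2) :=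
  EuclideanSpace.single ![b0, b1, b2, b3] 1

lemma sqrt6_aux : ((1 / Real.sqrt 6 : ℝ) : ℂ) = ((1 / Real.sqrt 2 : ℝ) : ℂ) * ((1 / Real.sqrt 3 : ℝ) : ℂ) := by
  have : Real.sqrt 6 = Real.sqrt 2 * Real.sqrt 3 := by
    rw [← Real.sqrt_mul (by norm_num)]; norm_num
  push_cast [this]
  rw [one_div, one_div, one_div, mul_inv]

lemma zmod2_aux : ∀ a : ZMod 2, a = 0 ∨ a = 1 := by decide

set_option maxHeartbeats 1000000 in
theorem stmt9 (α β : ℂ) :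
    Phi1 α β = ((1 / Real.sqrt 6 : ℝ) : ℂ) •
      ((α • ket4 0 0 1 0 + β • ket4 0 0 0 0 + α • ket4 0 0 0 1) +
       (α • ket4 0 1 0 0 + β • ket4 0 1 1 0 + β • ket4 0 1 0 1) +
       (α • ket4 1 0 1 0 - β • ket4 1 0 0 0 + α • ket4 1 0 0 1) +
       (α • ket4 1 1 0 0 - β • ket4 1 1 1 0 - β • ket4 1 1 0 1)) := by
  ext x
  have hx : x = ![x 0, x 1, x 2, x 3] := by
    funext i; fin_cases i <;> rfl
  rw [hx]
  rcases zmod2_aux (x 0) with h0 | h0 <;> rcases zmod2_aux (x 1) with h1 | h1 <;>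
    rcases zmod2_aux (x 2) with h2 | h2 <;> rcases zmod2_aux (x 3) with h3 | h3 <;>
    rw [h0, h1, h2, h3] <;>
    simp only [Phi1, had0, cnot01, jointState, w3amp, ket4, sqrt6_aux,
      Function.update_apply, EuclideanSpace.single_apply, PiLp.toLp_apply,
      Pi.add_apply, Pi.sub_apply, Pi.smul_apply, PiLp.add_apply, PiLp.sub_apply,
      PiLp.smul_apply, smul_eq_mul] <;>
    norm_num [funext_iff, Fin.forall_fin_succ, Matrix.cons_val_zero, Matrix.cons_val_one,
      Matrix.head_cons, Matrix.cons_val_succ, Matrix.cons_val_two, Matrix.cons_val_three, show (1:ZMod 2) ≠ 0 by decide,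
      show (0:ZMod 2) ≠ 1 by decide, show ((2:ZMod 2) = 1) ↔ False from by decide,
      show ((2:ZMod 2) = 0) ↔ True from by decide,
      show (1:Fin 4) ≠ 0 by decide, show (2:Fin 4) ≠ 0 by decide, show (2:Fin 4) ≠ 1 by decide,
      show (3:Fin 4) ≠ 0 by decide, show (3:Fin 4) ≠ 1 by decide] <;>
    ring
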